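/- Let R' be a commutative ring, T' ⊆ R' an ideal annihilated by p^{k'}, and let g̃(z) ∈ R'[z] be such that g̃(z)·∏_{χ∈X}(z − c_χ) has all coefficients in T', for a finite set X and elements c_χ ∈ R'. Suppose π : R'[z] → Q is a ring quotient in which each π(z − c_χ) divides p. Then p^{k' + |X|} · π(g̃(z)) = 0 in Q. -/
import Mathlib


open Polynomial

/-- Let `R'` be a commutative ring, `T' ⊆ R'` an ideal
annihilated by `p^{k'}`, and `g̃(z) ∈ R'[z]` such that
`g̃(z) · ∏_{χ ∈ X} (z − c_χ)` has all coefficients in `T'`, for a finite index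
set `X` and elements `c_χ ∈ R'`.  Suppose `π : R'[z] → Q` is a ring map to a
quotient in which each `π(z − c_χ)` divides `p`.  Then
`p^{k' + |X|} · π(g̃(z)) = 0` in `Q`. -/
theorem p_pow_kills_image_of_gtilde (p : ℕ) [Fact p.Prime]
    {R' : Type*} [CommRing R'] (T' : Ideal R') (k' : ℕ)
    (hT' : ∀ t ∈ T', (p : R') ^ k' * t = 0)
    {ι : Type*} (X : Finset ι) (c : ι → R')
    (gt : Polynomial R')
    (hcoeff : ∀ i : ℕ, (gt * ∏ χ ∈ X, (Polynomial.X - Polynomial.C (c χ))).coeff i ∈ T')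
    {Q : Type*} [CommRing Q] (π : Polynomial R' →+* Q)
    (hπ : Function.Surjective π)
    (hdvd : ∀ χ ∈ X, π (Polynomial.X - Polynomial.C (c χ)) ∣ (p : Q)) :
    (p : Q) ^ (k' + X.card) * π gt = 0 := by
  have h0 : (p : Polynomial R') ^ k' * (gt * ∏ χ ∈ X, (Polynomial.X - C (c χ))) = 0 := by
    ext i
    have : ((p : Polynomial R')) ^ k' = C ((p : R') ^ k') := by
      simp [map_pow]
    rw [this, coeff_C_mul, coeff_zero]
    exact hT' _ (hcoeff i)
  have h1 : (p : Q) ^ k' * (π gt * ∏ χ ∈ X, π (Polynomial.X - C (c χ))) = 0 := by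
    have := congrArg π h0
    simpa [map_pow, map_mul, map_prod] using this
  have h2 : (∏ χ ∈ X, π (Polynomial.X - C (c χ))) ∣ (p : Q) ^ X.card := by
    rw [← Finset.prod_const]
    exact Finset.prod_dvd_prod_of_dvd _ _ hdvd
  obtain ⟨v, hv⟩ := h2
  calc (p : Q) ^ (k' + X.card) * π gt
      = (p : Q) ^ k' * (π gt * ∏ χ ∈ X, π (Polynomial.X - C (c χ))) * v := by
        rw [pow_add, hv]; ring
    _ = 0 := by rw [h1, zero_mul]
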